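/- Let G act transitively on a set X and let f : P_fin(X) → ℝ be a G-invariant submodular function attaining its infimum on nonempty finite subsets. Then every element of X belongs to exactly one atom of f, and the atoms form a partition of X into blocks permuted by the G-action (g · Y₀ is an atom for every atom Y₀ and g ∈ G). -/
import Mathlib


open Pointwise

/-- An atom for `f` with minimum value `m`. -/
def IsAtomFor {S : Type*} (f : Finset S → ℝ) (m : ℝ) (A : Finset S) : Prop :=
  A.Nonempty ∧ f A = m ∧ ∀ B : Finset S, B.Nonempty → f B = m → A.card ≤ B.card

/-- If `G` acts transitively on `X` and `f` is a `G`-invariant submodular function on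
finite subsets of `X` attaining its minimum, then every element of `X` lies in exactly
one atom and `G` permutes the atoms. -/
theorem stmt_9 {G X : Type*} [Group G] [MulAction G X] [MulAction.IsPretransitive G X]
    [DecidableEq X]
    (f : Finset X → ℝ) (m : ℝ)
    (hsub : ∀ Y Z : Finset X, f (Y ∩ Z) + f (Y ∪ Z) ≤ f Y + f Z)
    (hinv : ∀ (g : G) (Y : Finset X), f (g • Y) = f Y)
    (hmin : ∀ Y : Finset X, Y.Nonempty → m ≤ f Y)
    (hatt : ∃ Y : Finset X, Y.Nonempty ∧ f Y = m) :
    (∀ x : X, ∃! Y₀ : Finset X, IsAtomFor f m Y₀ ∧ x ∈ Y₀) ∧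
    (∀ (g : G) (Y₀ : Finset X), IsAtomFor f m Y₀ → IsAtomFor f m (g • Y₀)) := by
  classical
  -- Atoms exist
  obtain ⟨Y, hYne, hYf⟩ := hatt
  have hex : ∃ n : ℕ, ∃ Z : Finset X, Z.Nonempty ∧ f Z = m ∧ Z.card = n :=
    ⟨Y.card, Y, hYne, hYf, rfl⟩
  obtain ⟨A, hAne, hAf, hAcard⟩ := Nat.find_spec hex
  have hAatom : IsAtomFor f m A := by
    refine ⟨hAne, hAf, ?_⟩
    intro B hBne hBf
    rw [hAcard]
    exact Nat.find_min' hex ⟨B, hBne, hBf, rfl⟩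
  -- Two atoms with nonempty intersection coincide
  have key : ∀ A B : Finset X, IsAtomFor f m A → IsAtomFor f m B →
      (A ∩ B).Nonempty → A = B := by
    intro A B hA hB hne
    have hUne : (A ∪ B).Nonempty := hA.1.mono Finset.subset_union_left
    have h1 : m ≤ f (A ∩ B) := hmin _ hne
    have h2 : m ≤ f (A ∪ B) := hmin _ hUne
    have h3 : f (A ∩ B) + f (A ∪ B) ≤ m + m := by
      have := hsub A B; rw [hA.2.1, hB.2.1] at this; exact this
    have hI : f (A ∩ B) = m := by linarith
    have hsubA : A ∩ B = A :=
      Finset.eq_of_subset_of_card_le Finset.inter_subset_left (hA.2.2 _ hne hI)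
    have hsubB : A ∩ B = B :=
      Finset.eq_of_subset_of_card_le Finset.inter_subset_right (hB.2.2 _ hne hI)
    exact hsubA.symm.trans hsubB
  -- G permutes atoms
  have hsmul : ∀ (g : G) (Y₀ : Finset X), IsAtomFor f m Y₀ → IsAtomFor f m (g • Y₀) := by
    intro g Y₀ hY₀
    refine ⟨hY₀.1.smul_finset, by rw [hinv g Y₀, hY₀.2.1], ?_⟩
    intro B hBne hBf
    rw [Finset.card_smul_finset]
    exact hY₀.2.2 B hBne hBf
  refine ⟨?_, hsmul⟩
  intro x
  obtain ⟨a, ha⟩ := hAne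
  obtain ⟨g, hg⟩ := MulAction.exists_smul_eq G a x
  refine ⟨g • A, ⟨hsmul g A hAatom, ?_⟩, ?_⟩
  · rw [← hg]; exact Finset.smul_mem_smul_finset ha
  · rintro B ⟨hB, hxB⟩
    exact key B (g • A) hB (hsmul g A hAatom)
      ⟨x, Finset.mem_inter.2 ⟨hxB, by rw [← hg]; exact Finset.smul_mem_smul_finset ha⟩⟩
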